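/- Let A ∈ ℝ^{m×n} be a fixed matrix and let 𝐛 ⊆ ℝᵐ, 𝐜 ⊆ ℝⁿ be interval vectors. If a pair (x⁺, x⁻) of vectors in ℝⁿ is optimal for some scenario of the interval linear program min c₁⊤x⁺ − c₂⊤x⁻ subject to Ax⁺ − Ax⁻ ≤ b, x⁺ ≥ 0, x⁻ ≥ 0 (with b ∈ 𝐛 and c₁ ∈ 𝐜, c₂ ∈ 𝐜 chosen independently), then the vector x = x⁺ − x⁻ is optimal for some scenario of the interval linear program min c⊤x subject to Ax ≤ b (with b ∈ 𝐛, c ∈ 𝐜). -/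

import Mathlib

open Matrix

/-- Given finitely many positive bounds, there is a single positive step size `t`
satisfying `t * u i ≤ s i` for all `i`. -/
private lemma exists_pos_step {ι : Type*} (F : Finset ι) (u s : ι → ℝ)
    (hs : ∀ i ∈ F, 0 < s i) : ∃ t : ℝ, 0 < t ∧ ∀ i ∈ F, t * u i ≤ s i := by
  classical
  induction F using Finset.cons_induction with
  | empty => exact ⟨1, one_pos, fun i hi => absurd hi (Finset.notMem_empty i)⟩
  | cons a F ha ih =>
    obtain ⟨t, ht, hF⟩ := ih (fun i hi => hs i (Finset.mem_cons_of_mem hi))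
    have hsa : 0 < s a := hs a (Finset.mem_cons_self a F)
    rcases le_or_gt (u a) 0 with hu | hu
    · refine ⟨t, ht, fun i hi => ?_⟩
      rcases Finset.mem_cons.mp hi with rfl | hi
      · exact le_trans (mul_nonpos_of_nonneg_of_nonpos ht.le hu) hsa.le
      · exact hF i hi
    · refine ⟨min t (s a / u a), lt_min ht (div_pos hsa hu), fun i hi => ?_⟩
      rcases Finset.mem_cons.mp hi with rfl | hi
      · calc min t (s i / u i) * u i ≤ (s i / u i) * u i :=
              mul_le_mul_of_nonneg_right (min_le_right _ _) hu.le
          _ = s i := div_mul_cancel₀ _ hu.ne'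
      · rcases le_or_gt (u i) 0 with h2 | h2
        · exact le_trans (mul_nonpos_of_nonneg_of_nonpos
            (le_min ht.le (div_pos hsa hu).le) h2) (hs i (Finset.mem_cons_of_mem hi)).le
        · exact le_trans (mul_le_mul_of_nonneg_right (min_le_left _ _) h2.le) (hF i hi)

/-- Farkas' lemma: if every `d` with `B i ⬝ᵥ d ≤ 0` for all `i` satisfies `0 ≤ w ⬝ᵥ d`,
then `-w` is a nonnegative combination of the rows `B i`. -/
private lemma farkas_aux {α : Type*} [Fintype α] :
    ∀ (k : ℕ) (B : Fin k → α → ℝ) (w : α → ℝ),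
      (∀ d : α → ℝ, (∀ i, B i ⬝ᵥ d ≤ 0) → 0 ≤ w ⬝ᵥ d) →
      ∃ y : Fin k → ℝ, (∀ i, 0 ≤ y i) ∧ ∑ i, y i • B i = -w := by
  intro k
  induction k with
  | zero =>
    intro B w h
    have h0 : 0 ≤ w ⬝ᵥ (-w) := h (-w) (fun i => i.elim0)
    rw [dotProduct_neg] at h0
    have hw : w = 0 := by
      rw [← dotProduct_self_eq_zero (v := w)]
      exact le_antisymm (by linarith) (Finset.sum_nonneg fun i _ => mul_self_nonneg _)
    exact ⟨0, fun i => le_refl 0, by simp [hw]⟩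
  | succ k ih =>
    intro B w h
    classical
    set a := B (Fin.last k) with ha_def
    set B' : Fin k → α → ℝ := fun i => B i.castSucc with hB'def
    by_cases hcase : ∀ d : α → ℝ, (∀ i, B' i ⬝ᵥ d ≤ 0) → 0 ≤ w ⬝ᵥ d
    · obtain ⟨y', hy', hsum⟩ := ih B' w hcase
      refine ⟨Fin.snoc y' 0, fun i => ?_, ?_⟩
      · induction i using Fin.lastCases with
        | last => simp
        | cast i => simpa using hy' i
      · rw [Fin.sum_univ_castSucc]
        simpa using hsum
    · push_neg at hcase
      obtain ⟨d₀, hd₀B, hd₀w⟩ := hcase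
      have hρ : 0 < a ⬝ᵥ d₀ := by
        by_contra hρ
        push_neg at hρ
        have hall : ∀ i, B i ⬝ᵥ d₀ ≤ 0 := by
          intro i
          induction i using Fin.lastCases with
          | last => exact hρ
          | cast i => exact hd₀B i
        exact absurd (h d₀ hall) (not_le.mpr hd₀w)
      set ρ := a ⬝ᵥ d₀ with hρdef
      have hρ0 : ρ ≠ 0 := ne_of_gt hρ
      set C : Fin k → α → ℝ := fun i => B' i - ((B' i ⬝ᵥ d₀) / ρ) • a with hCdef
      set w' : α → ℝ := w - ((w ⬝ᵥ d₀) / ρ) • a with hw'def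
      have key : ∀ d : α → ℝ, (∀ i, C i ⬝ᵥ d ≤ 0) → 0 ≤ w' ⬝ᵥ d := by
        intro d hd
        set d' : α → ℝ := d - ((a ⬝ᵥ d) / ρ) • d₀ with hd'def
        have had' : a ⬝ᵥ d' = 0 := by
          simp only [hd'def, dotProduct_sub, dotProduct_smul, smul_eq_mul, ← hρdef]
          field_simp
          ring
        have hBd' : ∀ i : Fin (k + 1), B i ⬝ᵥ d' ≤ 0 := by
          intro i
          induction i using Fin.lastCases with
          | last => exact le_of_eq had'
          | cast i =>
            have hEq : B i.castSucc ⬝ᵥ d' = C i ⬝ᵥ d := by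
              simp only [hd'def, hCdef, dotProduct_sub, sub_dotProduct, dotProduct_smul,
                smul_dotProduct, smul_eq_mul, hB'def]
              field_simp
            rw [hEq]
            exact hd i
        have h1 := h d' hBd'
        have hEq : w ⬝ᵥ d' = w' ⬝ᵥ d := by
          simp only [hd'def, hw'def, dotProduct_sub, sub_dotProduct, dotProduct_smul,
            smul_dotProduct, smul_eq_mul]
          field_simp
        rwa [hEq] at h1
      obtain ⟨y', hy', hsum⟩ := ih C w' key
      set S := ∑ i, y' i * (B' i ⬝ᵥ d₀) with hSdef
      set μ := (-(w ⬝ᵥ d₀) - S) / ρ with hμdef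
      have hμ0 : 0 ≤ μ := by
        apply div_nonneg _ hρ.le
        have hS0 : S ≤ 0 := Finset.sum_nonpos
          (fun i _ => mul_nonpos_of_nonneg_of_nonpos (hy' i) (hd₀B i))
        linarith
      refine ⟨Fin.snoc y' μ, fun i => ?_, ?_⟩
      · induction i using Fin.lastCases with
        | last => simpa using hμ0
        | cast i => simpa using hy' i
      · rw [Fin.sum_univ_castSucc]
        simp only [Fin.snoc_castSucc, Fin.snoc_last]
        funext x
        have hx := congrFun hsum x
        simp only [Finset.sum_apply, Pi.smul_apply, Pi.sub_apply, Pi.neg_apply,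
          smul_eq_mul, Pi.add_apply, hCdef, hw'def] at hx ⊢
        have expand : ∀ i : Fin k,
            y' i * (B' i x - (B' i ⬝ᵥ d₀) / ρ * a x)
              = y' i * B' i x - (y' i * (B' i ⬝ᵥ d₀)) * (a x / ρ) := fun i => by ring
        rw [Finset.sum_congr rfl (fun i _ => expand i), Finset.sum_sub_distrib,
          ← Finset.sum_mul, ← hSdef] at hx
        rw [hμdef]
        have hgoal : (∑ i, y' i * B' i x) = -(w x) + (w ⬝ᵥ d₀) / ρ * a x + S * (a x / ρ) := by
          linarith [hx]
        rw [hgoal]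
        field_simp
        ring

/-- If `(x⁺, x⁻)` is weakly optimal for the transformed program
`min c₁ᵀx⁺ - c₂ᵀx⁻, Ax⁺ - Ax⁻ ≤ b, x⁺ ≥ 0, x⁻ ≥ 0` with a fixed matrix `A`, then
`x = x⁺ - x⁻` is weakly optimal for `min cᵀx, Ax ≤ b`. -/
theorem weak_optimality_nonneg_substitution_backward (m n : ℕ) (A : Matrix (Fin m) (Fin n) ℝ)
    (bl bu : Fin m → ℝ) (cl cu : Fin n → ℝ) (hb : bl ≤ bu) (hc : cl ≤ cu)
    (xp xm : Fin n → ℝ)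
    (hopt : ∃ (b : Fin m → ℝ) (c₁ c₂ : Fin n → ℝ),
      bl ≤ b ∧ b ≤ bu ∧ cl ≤ c₁ ∧ c₁ ≤ cu ∧ cl ≤ c₂ ∧ c₂ ≤ cu ∧
      (A.mulVec xp - A.mulVec xm ≤ b ∧ 0 ≤ xp ∧ 0 ≤ xm) ∧
      ∀ xp' xm' : Fin n → ℝ,
        (A.mulVec xp' - A.mulVec xm' ≤ b ∧ 0 ≤ xp' ∧ 0 ≤ xm') →
        c₁ ⬝ᵥ xp - c₂ ⬝ᵥ xm ≤ c₁ ⬝ᵥ xp' - c₂ ⬝ᵥ xm') :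
    ∃ (b : Fin m → ℝ) (c : Fin n → ℝ), bl ≤ b ∧ b ≤ bu ∧ cl ≤ c ∧ c ≤ cu ∧
      A.mulVec (xp - xm) ≤ b ∧
      ∀ x' : Fin n → ℝ, A.mulVec x' ≤ b → c ⬝ᵥ (xp - xm) ≤ c ⬝ᵥ x' := by
  classical
  obtain ⟨b, c₁, c₂, hbl, hbu, hc₁l, hc₁u, hc₂l, hc₂u, ⟨hfeas, hxp0, hxm0⟩, hopt'⟩ := hopt
  -- Set up the row system of the transformed LP over variables (p, q) : Fin n ⊕ Fin n → ℝ
  set g : (Fin m ⊕ (Fin n ⊕ Fin n)) → (Fin n ⊕ Fin n) → ℝ :=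
    Sum.elim (fun i => Sum.elim (fun j => A i j) (fun j => -A i j))
             (fun j' => -Pi.single j' 1) with hg
  set β : (Fin m ⊕ (Fin n ⊕ Fin n)) → ℝ := Sum.elim b 0 with hβ
  set z : (Fin n ⊕ Fin n) → ℝ := Sum.elim xp xm with hz
  set w : (Fin n ⊕ Fin n) → ℝ := Sum.elim c₁ (-c₂) with hw
  have hg1 : ∀ (i : Fin m) (zz : (Fin n ⊕ Fin n) → ℝ),
      g (Sum.inl i) ⬝ᵥ zz = A.mulVec (zz ∘ Sum.inl) i - A.mulVec (zz ∘ Sum.inr) i := by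
    intro i zz
    simp [hg, dotProduct, Fintype.sum_sum_type, mulVec, Finset.sum_neg_distrib,
      sub_eq_add_neg, Function.comp]
  have hg2 : ∀ (j' : Fin n ⊕ Fin n) (zz : (Fin n ⊕ Fin n) → ℝ),
      g (Sum.inr j') ⬝ᵥ zz = -(zz j') := by
    intro j' zz
    simp [hg, neg_dotProduct, single_dotProduct]
  have hobj : ∀ zz : (Fin n ⊕ Fin n) → ℝ,
      w ⬝ᵥ zz = c₁ ⬝ᵥ (zz ∘ Sum.inl) - c₂ ⬝ᵥ (zz ∘ Sum.inr) := by
    intro zz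
    simp [hw, dotProduct, Fintype.sum_sum_type, Finset.sum_neg_distrib,
      sub_eq_add_neg, Function.comp]
  have hzfeas : ∀ i : (Fin m ⊕ (Fin n ⊕ Fin n)), g i ⬝ᵥ z ≤ β i := by
    intro i
    cases i with
    | inl i => rw [hg1]; exact hfeas i
    | inr j' =>
      rw [hg2]
      cases j' with
      | inl j => simpa [hβ, hz] using hxp0 j
      | inr j => simpa [hβ, hz] using hxm0 j
  have hoptz : ∀ zz : (Fin n ⊕ Fin n) → ℝ, (∀ i, g i ⬝ᵥ zz ≤ β i) → w ⬝ᵥ z ≤ w ⬝ᵥ zz := by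
    intro zz hzz
    rw [hobj z, hobj zz]
    have hzinl : z ∘ Sum.inl = xp := rfl
    have hzinr : z ∘ Sum.inr = xm := rfl
    rw [hzinl, hzinr]
    apply hopt'
    refine ⟨fun i => ?_, fun j => ?_, fun j => ?_⟩
    · have := hzz (Sum.inl i); rw [hg1] at this; simpa [hβ] using this
    · have := hzz (Sum.inr (Sum.inl j)); rw [hg2] at this; simpa [hβ] using this
    · have := hzz (Sum.inr (Sum.inr j)); rw [hg2] at this; simpa [hβ] using this
  -- directional optimality at z over active rows
  have hdir : ∀ d : (Fin n ⊕ Fin n) → ℝ,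
      (∀ i, g i ⬝ᵥ z = β i → g i ⬝ᵥ d ≤ 0) → 0 ≤ w ⬝ᵥ d := by
    intro d hd
    obtain ⟨t, ht, hstep⟩ := exists_pos_step Finset.univ (fun i => g i ⬝ᵥ d)
      (fun i => if g i ⬝ᵥ z = β i then 1 else β i - g i ⬝ᵥ z)
      (fun i _ => by
        split
        · norm_num
        · exact sub_pos.mpr (lt_of_le_of_ne (hzfeas i) (by assumption)))
    have hfeas' : ∀ i, g i ⬝ᵥ (z + t • d) ≤ β i := by
      intro i
      rw [dotProduct_add, dotProduct_smul, smul_eq_mul]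
      by_cases hac : g i ⬝ᵥ z = β i
      · have h1 := hd i hac
        nlinarith
      · have h1 := hstep i (Finset.mem_univ i)
        rw [if_neg hac] at h1
        linarith
    have h2 := hoptz _ hfeas'
    rw [dotProduct_add, dotProduct_smul, smul_eq_mul] at h2
    nlinarith
  -- Farkas on the active rows
  obtain ⟨y', hy', hsum⟩ := farkas_aux (Fintype.card {i : (Fin m ⊕ (Fin n ⊕ Fin n)) // g i ⬝ᵥ z = β i})
    (fun j => g ((Fintype.equivFin {i : (Fin m ⊕ (Fin n ⊕ Fin n)) // g i ⬝ᵥ z = β i}).symm j : {i : (Fin m ⊕ (Fin n ⊕ Fin n)) // g i ⬝ᵥ z = β i}))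
    w
    (fun d hd0 => hdir d (fun i hi => by
      simpa using hd0 ((Fintype.equivFin {i : (Fin m ⊕ (Fin n ⊕ Fin n)) // g i ⬝ᵥ z = β i}) ⟨i, hi⟩)))
  set e := (Fintype.equivFin {i : (Fin m ⊕ (Fin n ⊕ Fin n)) // g i ⬝ᵥ z = β i}).symm with he
  set Y : (Fin m ⊕ (Fin n ⊕ Fin n)) → ℝ := fun i => if h : g i ⬝ᵥ z = β i then y' (e.symm ⟨i, h⟩) else 0 with hYdef
  have hY0 : ∀ i, 0 ≤ Y i := by
    intro i
    rw [hYdef]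
    dsimp only
    split
    · exact hy' _
    · exact le_refl 0
  have hYact : ∀ i, Y i ≠ 0 → g i ⬝ᵥ z = β i := by
    intro i h
    by_contra hcon
    exact h (by rw [hYdef]; exact dif_neg hcon)
  have hYsum : ∑ i, Y i • g i = -w := by
    rw [← hsum]
    rw [← Finset.sum_filter_of_ne (p := fun i => g i ⬝ᵥ z = β i)
      (f := fun i => Y i • g i)
      (by
        intro x _ hx
        by_contra hcon
        exact hx (by rw [hYdef]; dsimp only; rw [dif_neg hcon, zero_smul]))]
    rw [← Finset.sum_subtype_eq_sum_filter (fun i => Y i • g i) (p := fun i => g i ⬝ᵥ z = β i),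
      Finset.subtype_univ]
    rw [← Equiv.sum_comp e (fun a => Y (a : (Fin m ⊕ (Fin n ⊕ Fin n))) • g (a : (Fin m ⊕ (Fin n ⊕ Fin n))))]
    apply Finset.sum_congr rfl
    intro j _
    congr 1
    rw [hYdef]
    dsimp only
    rw [dif_pos (e j).2]
    congr 1
    rw [show (⟨(e j : (Fin m ⊕ (Fin n ⊕ Fin n))), (e j).2⟩ : {i : (Fin m ⊕ (Fin n ⊕ Fin n)) // g i ⬝ᵥ z = β i}) = e j from Subtype.ext rfl,
      Equiv.symm_apply_apply]
  -- extract the components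
  set y : Fin m → ℝ := fun i => Y (Sum.inl i) with hydef
  set u : Fin n → ℝ := fun j => Y (Sum.inr (Sum.inl j)) with hudef
  set v : Fin n → ℝ := fun j => Y (Sum.inr (Sum.inr j)) with hvdef
  have hcoord : ∀ x0 : Fin n ⊕ Fin n, ∑ i, Y i * g i x0 = -(w x0) := by
    intro x0
    have := congrFun hYsum x0
    simpa [Finset.sum_apply, Pi.smul_apply, smul_eq_mul] using this
  have hA1 : ∀ j0 : Fin n, (∑ i, y i * A i j0) - u j0 = -(c₁ j0) := by
    intro j0
    have := hcoord (Sum.inl j0)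
    simp only [hg, hw, Sum.elim_inl, Sum.elim_inr, Fintype.sum_sum_type, Pi.neg_apply,
      Pi.single_apply, mul_ite, mul_one, mul_zero, mul_neg, Finset.sum_neg_distrib] at this
    simp only [Sum.inl.injEq, Finset.sum_ite_eq', Finset.mem_univ, if_true] at this
    simpa [hydef, hudef, sub_eq_add_neg] using this
  have hA2 : ∀ j0 : Fin n, -(∑ i, y i * A i j0) - v j0 = c₂ j0 := by
    intro j0
    have := hcoord (Sum.inr j0)
    simp only [hg, hw, Sum.elim_inl, Sum.elim_inr, Fintype.sum_sum_type, Pi.neg_apply,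
      Pi.single_apply, mul_ite, mul_one, mul_zero, mul_neg, Finset.sum_neg_distrib] at this
    simp only [Sum.inr.injEq, Finset.sum_ite_eq', Finset.mem_univ, if_true] at this
    simpa [hydef, hvdef, sub_eq_add_neg, Finset.sum_neg_distrib] using this
  set c : Fin n → ℝ := fun j => -(∑ i, y i * A i j) with hcdef
  have hcub : ∀ j, c j ≤ c₁ j := by
    intro j
    have h1 := hA1 j
    have h2 := hY0 (Sum.inr (Sum.inl j))
    rw [hcdef]
    dsimp only
    have h3 : u j = Y (Sum.inr (Sum.inl j)) := rfl
    rw [h3] at h1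
    linarith
  have hclb : ∀ j, c₂ j ≤ c j := by
    intro j
    have h1 := hA2 j
    have h2 := hY0 (Sum.inr (Sum.inr j))
    rw [hcdef]
    dsimp only
    have h3 : v j = Y (Sum.inr (Sum.inr j)) := rfl
    rw [h3] at h1
    linarith
  have hmv : A.mulVec (xp - xm) = A.mulVec xp - A.mulVec xm := A.mulVec_sub xp xm
  have hc_dot : ∀ zv : Fin n → ℝ, c ⬝ᵥ zv = -(∑ i, y i * A.mulVec zv i) := by
    intro zv
    rw [hcdef]
    simp only [dotProduct, mulVec, Finset.mul_sum, neg_mul, Finset.sum_neg_distrib]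
    rw [Finset.sum_comm]
    congr 1
    apply Finset.sum_congr rfl
    intro i _
    rw [Finset.sum_mul]
    apply Finset.sum_congr rfl
    intro j _
    ring
  refine ⟨b, c, hbl, hbu, fun j => le_trans (hc₂l j) (hclb j),
    fun j => le_trans (hcub j) (hc₁u j), ?_, ?_⟩
  · rw [hmv]; exact hfeas
  · intro x' hx'
    rw [hc_dot, hc_dot, neg_le_neg_iff]
    apply Finset.sum_le_sum
    intro i _
    by_cases hyi : y i = 0
    · simp [hyi]
    · have hact : g (Sum.inl i) ⬝ᵥ z = β (Sum.inl i) := hYact (Sum.inl i) hyi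
      rw [hg1] at hact
      have hface : A.mulVec (xp - xm) i = b i := by
        rw [hmv]
        simpa [hβ, hz] using hact
      rw [hface]
      exact mul_le_mul_of_nonneg_left (hx' i) (hY0 (Sum.inl i))
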